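/- arXiv:2309.14039 — 2 statements merged into one kernel-verified Lean document; each statement's English description precedes it below -/
import Mathlib

section
/- For any p-port circuit — that is, a superport circuit in which every superport has exactly two vertices — there exists a collection of currents I_{kl} (1 ≤ k,l ≤ n) and voltages U_1,…,U_n satisfying axioms (C), (I), (P), (B); moreover, the currents are unique, and the voltages are unique up to adding the same constant to all of them. -/
open Finset BigOperators
open scoped Classical

namespace Superport

/-- A superport network: a finite connected simple graph on `Fin n` with conductances `c`
and `p` nonempty pairwise disjoint superports `A 0, …, A (p-1)` occupying the initial
segment of the vertices, ordered consecutively. -/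
structure Network where
  n : ℕ
  p : ℕ
  graph : SimpleGraph (Fin n)
  c : Fin n → Fin n → ℝ
  A : Fin p → Finset (Fin n)
  p_pos : 0 < p
  connected : graph.Connected
  c_symm : ∀ k l, c k l = c l k
  c_pos : ∀ k l, graph.Adj k l → 0 < c k l
  c_zero : ∀ k l, ¬ graph.Adj k l → c k l = 0
  A_nonempty : ∀ i, (A i).Nonempty
  A_disjoint : ∀ i j, i ≠ j → Disjoint (A i) (A j)
  A_ordered : ∀ i j u v, i < j → u ∈ A i → v ∈ A j → u < v
  boundary_initial : ∀ v : Fin n, (∃ i, v ∈ A i) ↔ (v : ℕ) < ∑ i, (A i).card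

namespace Network

variable (N : Network)

/-- The set of boundary vertices. -/
def M : Finset (Fin N.n) := Finset.univ.biUnion N.A

/-- The number of boundary vertices. -/
def m : ℕ := N.M.card

theorem mem_M_iff {v : Fin N.n} : v ∈ N.M ↔ ∃ i, v ∈ N.A i := by
  simp [M, Finset.mem_biUnion]

/-- The root of the superport of a boundary vertex `v` (the vertex of maximal number
in the superport containing `v`); for interior `v` we set `root v = v`. -/
noncomputable def root (v : Fin N.n) : Fin N.n :=
  if h : ∃ i, v ∈ N.A i then (N.A h.choose).max' ⟨v, h.choose_spec⟩ else v

/-- The index of the last superport. -/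
def lastPort : Fin N.p := ⟨N.p - 1, Nat.sub_lt N.p_pos Nat.one_pos⟩

theorem M_nonempty : N.M.Nonempty := by
  obtain ⟨v, hv⟩ := N.A_nonempty N.lastPort
  exact ⟨v, N.mem_M_iff.mpr ⟨N.lastPort, hv⟩⟩

theorem root_mem {v : Fin N.n} (hv : v ∈ N.M) : N.root v ∈ N.M := by
  have h : ∃ i, v ∈ N.A i := N.mem_M_iff.mp hv
  rw [root, dif_pos h]
  exact N.mem_M_iff.mpr ⟨h.choose, (N.A h.choose).max'_mem _⟩

theorem root_eq_self_of_max {v : Fin N.n} (hv : v ∈ N.M) (hmax : ∀ u ∈ N.M, u ≤ v) :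
    N.root v = v := by
  have h : ∃ i, v ∈ N.A i := N.mem_M_iff.mp hv
  rw [root, dif_pos h]
  exact le_antisymm (hmax _ (N.mem_M_iff.mpr ⟨h.choose, (N.A h.choose).max'_mem _⟩))
    (Finset.le_max' _ _ h.choose_spec)

/-- Axioms (C), (I), (P), (B) for voltages `U`, currents `I`, and prescribed voltage
differences `ΔU` (only the values of `ΔU` at non-root boundary vertices are relevant). -/
def Axioms (ΔU U : Fin N.n → ℝ) (I : Fin N.n → Fin N.n → ℝ) : Prop :=
  (∀ k l, I k l = N.c k l * (U k - U l)) ∧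
  (∀ k, k ∉ N.M → ∑ l, I k l = 0) ∧
  (∀ i : Fin N.p, i ≠ N.lastPort → ∑ k ∈ N.A i, ∑ l, I k l = 0) ∧
  (∀ k, k ∈ N.M → N.root k ≠ k → U k - U (N.root k) = ΔU k)

/-- The weight of a subgraph: the product of the conductances of its edges. -/
noncomputable def weight (H : SimpleGraph (Fin N.n)) : ℝ :=
  ∏ e ∈ (Set.toFinite H.edgeSet).toFinset, Sym2.lift ⟨N.c, N.c_symm⟩ e

/-- The number of edges of a subgraph. -/
noncomputable def edgeCount (H : SimpleGraph (Fin N.n)) : ℕ :=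
  (Set.toFinite H.edgeSet).toFinset.card

/-- Two vertices lie in a common superport. -/
def samePort (u v : Fin N.n) : Prop := ∃ i, u ∈ N.A i ∧ v ∈ N.A i

/-- The `X`-equivalence: two boundary vertices not in `X` are equivalent iff they lie in
the same superport; each interior vertex and each vertex of `X` forms a singleton class.
For `X = ∅` this is the equivalence relation `∼`. -/
def xSetoid (X : Set (Fin N.n)) : Setoid (Fin N.n) where
  r u v := u = v ∨ (u ∉ X ∧ v ∉ X ∧ N.samePort u v)
  iseqv := by
    constructor
    · intro u; exact Or.inl rfl
    · rintro u v (rfl | ⟨hu, hv, i, hui, hvi⟩)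
      · exact Or.inl rfl
      · exact Or.inr ⟨hv, hu, i, hvi, hui⟩
    · rintro u v w huv hvw
      rcases huv with rfl | ⟨hu, hv, i, hui, hvi⟩
      · exact hvw
      rcases hvw with rfl | ⟨hv', hw, j, hvj, hwj⟩
      · exact Or.inr ⟨hu, hv, i, hui, hvi⟩
      · have hij : i = j := by
          by_contra hij
          exact (Finset.disjoint_left.mp (N.A_disjoint i j hij) hvi) hvj
        exact Or.inr ⟨hu, hw, i, hui, hij ▸ hwj⟩

/-- The quotient of a graph `H` by an equivalence relation `s`: classes `a ≠ b` are
adjacent iff some representatives are adjacent in `H`. -/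
def quotGraph (H : SimpleGraph (Fin N.n)) (s : Setoid (Fin N.n)) :
    SimpleGraph (Quotient s) where
  Adj a b := a ≠ b ∧ ∃ u v, H.Adj u v ∧ Quotient.mk s u = a ∧ Quotient.mk s v = b
  symm := by
    constructor
    rintro a b ⟨hab, u, v, huv, hu, hv⟩
    exact ⟨hab.symm, v, u, huv.symm, hv, hu⟩
  loopless := by
    constructor
    rintro a ⟨hab, -⟩
    exact hab rfl

/-- A spanning forest of the network. -/
def IsSpanningForest (H : SimpleGraph (Fin N.n)) : Prop := H ≤ N.graph ∧ H.IsAcyclic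

/-- A spanning forest becomes a spanning tree in the quotient by the `X`-equivalence
(in the multigraph sense): the quotient is connected and the number of edges of the
forest is one less than the number of equivalence classes.  For `X = {i}` this is
"valid relative to the vertex `i`"; for `X = ∅` this is "valid". -/
def IsValidRel (X : Set (Fin N.n)) (H : SimpleGraph (Fin N.n)) : Prop :=
  N.IsSpanningForest H ∧ (N.quotGraph H (N.xSetoid X)).Connected ∧
    N.edgeCount H + 1 = Nat.card (Quotient (N.xSetoid X))

/-- A valid forest: a spanning forest which becomes a spanning tree in the quotient
by the equivalence `∼`. -/
def IsValidForest (H : SimpleGraph (Fin N.n)) : Prop := N.IsValidRel ∅ H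

/-- The sign `sgn(H, i, j)` of a spanning forest `H` with respect to vertices `i, j`. -/
noncomputable def sgnIJ (H : SimpleGraph (Fin N.n)) (i j : Fin N.n) : ℝ :=
  if i = j ∨ ¬ (N.quotGraph H (N.xSetoid {i, j})).Reachable
      (Quotient.mk (N.xSetoid {i, j}) i) (Quotient.mk (N.xSetoid {i, j}) j)
  then 1 else -1

/-- The type of non-root boundary vertices. -/
abbrev NonRoot := {v : Fin N.n // v ∈ N.M ∧ N.root v ≠ v}

/-- The type of boundary vertices. -/
abbrev Bdry := {v : Fin N.n // v ∈ N.M}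

/-- `L` is the response matrix of the superport network: for any admissible voltages and
currents, the incoming currents at the non-root boundary vertices are obtained from the
prescribed voltage differences by multiplication by `L`. -/
def IsResponse (L : Matrix N.NonRoot N.NonRoot ℝ) : Prop :=
  ∀ (ΔU U : Fin N.n → ℝ) (I : Fin N.n → Fin N.n → ℝ), N.Axioms ΔU U I →
    ∀ x : N.NonRoot, (∑ l, I x.1 l) = ∑ y : N.NonRoot, L x y * ΔU y.1

/-- `C` is the response matrix of the electrical network obtained by unifying all the
superports: same graph and conductances, boundary vertices `M`; axioms (C) and (I). -/
def IsElecResponse (C : Matrix N.Bdry N.Bdry ℝ) : Prop :=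
  ∀ (Ub : N.Bdry → ℝ) (U : Fin N.n → ℝ) (I : Fin N.n → Fin N.n → ℝ),
    (∀ k l, I k l = N.c k l * (U k - U l)) →
    (∀ k, k ∉ N.M → ∑ l, I k l = 0) →
    (∀ v : N.Bdry, U v.1 = Ub v) →
    ∀ v : N.Bdry, (∑ l, I v.1 l) = ∑ u : N.Bdry, C v u * Ub u

/-- The sum of the weights of all valid forests. -/
noncomputable def validForestSum : ℝ :=
  ∑ H ∈ Finset.univ.filter (fun H => N.IsValidForest H), N.weight H

end Network
end Superport

namespace Superport
namespace Network
variable (N : Network)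

lemma port_eq_of_mem {i j : Fin N.p} {v : Fin N.n} (hi : v ∈ N.A i) (hj : v ∈ N.A j) : i = j := by
  by_contra h
  exact (Finset.disjoint_left.mp (N.A_disjoint i j h) hi) hj

lemma root_eq_max' {i : Fin N.p} {v : Fin N.n} (hv : v ∈ N.A i) :
    N.root v = (N.A i).max' ⟨v, hv⟩ := by
  have h : ∃ j, v ∈ N.A j := ⟨i, hv⟩
  rw [root, dif_pos h]
  congr 1
  exact congrArg N.A (N.port_eq_of_mem h.choose_spec hv)

lemma root_mem_port {i : Fin N.p} {v : Fin N.n} (hv : v ∈ N.A i) :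
    N.root v ∈ N.A i := by
  rw [N.root_eq_max' hv]; exact (N.A i).max'_mem _

lemma c_nonneg (k l : Fin N.n) : 0 ≤ N.c k l := by
  by_cases h : N.graph.Adj k l
  · exact (N.c_pos k l h).le
  · rw [N.c_zero k l h]

/-- `R i` is the root of superport `i`. -/
noncomputable def portRoot (i : Fin N.p) : Fin N.n := (N.A i).max' (N.A_nonempty i)

lemma portRoot_mem (i : Fin N.p) : N.portRoot i ∈ N.A i := (N.A i).max'_mem _

lemma root_eq_portRoot {i : Fin N.p} {v : Fin N.n} (hv : v ∈ N.A i) :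
    N.root v = N.portRoot i := N.root_eq_max' hv

lemma portRoot_injective : Function.Injective N.portRoot := by
  intro i j h
  exact N.port_eq_of_mem (N.portRoot_mem i) (h ▸ N.portRoot_mem j)

lemma n_pos : 0 < N.n := by
  obtain ⟨v, _⟩ := N.M_nonempty
  exact v.pos

end Network
end Superport

namespace Superport
namespace Network
variable (N : Network)

/-- Sum of currents out of vertex `k` for potential `U`. -/
noncomputable def S (U : Fin N.n → ℝ) (k : Fin N.n) : ℝ := ∑ l, N.c k l * (U k - U l)

lemma sum_S_eq_zero (U : Fin N.n → ℝ) : ∑ k, N.S U k = 0 := by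
  have h1 : ∑ k, N.S U k = ∑ k, ∑ l, N.c k l * (U k - U l) := rfl
  have h2 : ∑ k : Fin N.n, ∑ l : Fin N.n, N.c k l * (U k - U l)
      = - ∑ k : Fin N.n, ∑ l : Fin N.n, N.c k l * (U k - U l) := by
    conv_lhs => rw [Finset.sum_comm]
    rw [← Finset.sum_neg_distrib]
    apply Finset.sum_congr rfl; intro l _
    rw [← Finset.sum_neg_distrib]
    apply Finset.sum_congr rfl; intro k _
    rw [N.c_symm l k]; ring
  rw [h1]; linarith [h2]

lemma energy_eq (U : Fin N.n → ℝ) :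
    ∑ k : Fin N.n, ∑ l : Fin N.n, N.c k l * (U k - U l) ^ 2
      = 2 * ∑ k, U k * N.S U k := by
  have key : ∀ k l : Fin N.n, N.c k l * (U k - U l) ^ 2
      = N.c k l * (U k * (U k - U l)) + N.c l k * (U l * (U l - U k)) := by
    intro k l; rw [N.c_symm l k]; ring
  have h1 : ∑ k : Fin N.n, ∑ l : Fin N.n, N.c k l * (U k - U l) ^ 2
      = ∑ k : Fin N.n, ∑ l : Fin N.n, N.c k l * (U k * (U k - U l))
        + ∑ k : Fin N.n, ∑ l : Fin N.n, N.c l k * (U l * (U l - U k)) := by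
    rw [← Finset.sum_add_distrib]
    apply Finset.sum_congr rfl; intro k _
    rw [← Finset.sum_add_distrib]
    exact Finset.sum_congr rfl fun l _ => key k l
  have h2 : ∑ k : Fin N.n, ∑ l : Fin N.n, N.c l k * (U l * (U l - U k))
      = ∑ k : Fin N.n, ∑ l : Fin N.n, N.c k l * (U k * (U k - U l)) := Finset.sum_comm
  have h3 : ∑ k : Fin N.n, ∑ l : Fin N.n, N.c k l * (U k * (U k - U l))
      = ∑ k, U k * N.S U k := by
    apply Finset.sum_congr rfl; intro k _
    rw [S, Finset.mul_sum]
    apply Finset.sum_congr rfl; intro l _; ring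
  rw [h1, h2, h3]; ring

/-- Energy lemma: homogeneous constraints force `U` constant on edges. -/
lemma eq_on_adj_of_homogeneous (U : Fin N.n → ℝ)
    (hI : ∀ k, k ∉ N.M → N.S U k = 0)
    (hP : ∀ i : Fin N.p, i ≠ N.lastPort → ∑ k ∈ N.A i, N.S U k = 0)
    (hB : ∀ k ∈ N.M, U k = U (N.root k)) :
    ∀ k l, N.graph.Adj k l → U k = U l := by
  -- U is constant on each superport, equal to value at the port root
  have hUport : ∀ i : Fin N.p, ∀ k ∈ N.A i, U k = U (N.portRoot i) := by
    intro i k hk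
    rw [← N.root_eq_portRoot hk]
    exact hB k (N.mem_M_iff.mpr ⟨i, hk⟩)
  -- sum over M equals sum over superports
  have hMsum : ∀ f : Fin N.n → ℝ, ∑ k ∈ N.M, f k = ∑ i : Fin N.p, ∑ k ∈ N.A i, f k := by
    intro f
    rw [M, Finset.sum_biUnion]
    intro i _ j _ hij
    exact N.A_disjoint i j hij
  -- total over last port is zero
  have hsplit : ∀ f : Fin N.n → ℝ,
      ∑ k : Fin N.n, f k = ∑ k ∈ N.M, f k + ∑ k ∈ N.Mᶜ, f k := by
    intro f; rw [Finset.sum_add_sum_compl]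
  have hlast : ∑ k ∈ N.A N.lastPort, N.S U k = 0 := by
    have h0 := N.sum_S_eq_zero U
    rw [hsplit (N.S U), hMsum (N.S U)] at h0
    have hcomp : ∑ k ∈ N.Mᶜ, N.S U k = 0 := by
      apply Finset.sum_eq_zero; intro k hk
      exact hI k (Finset.mem_compl.mp hk)
    have hsum : ∑ i : Fin N.p, ∑ k ∈ N.A i, N.S U k = ∑ k ∈ N.A N.lastPort, N.S U k := by
      rw [Finset.sum_eq_single N.lastPort]
      · intro i _ hi; exact hP i hi
      · intro h; exact absurd (Finset.mem_univ _) h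
    rw [hsum] at h0; linarith
  -- total energy is zero
  have hE : ∑ k, U k * N.S U k = 0 := by
    rw [hsplit (fun k => U k * N.S U k)]
    have hc : ∑ k ∈ N.Mᶜ, U k * N.S U k = 0 :=
      Finset.sum_eq_zero fun k hk => by rw [hI k (Finset.mem_compl.mp hk), mul_zero]
    have hm : ∑ k ∈ N.M, U k * N.S U k = 0 := by
      rw [hMsum]
      apply Finset.sum_eq_zero; intro i _
      have : ∑ k ∈ N.A i, U k * N.S U k = U (N.portRoot i) * ∑ k ∈ N.A i, N.S U k := by
        rw [Finset.mul_sum]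
        exact Finset.sum_congr rfl fun k hk => by rw [hUport i k hk]
      rw [this]
      by_cases hi : i = N.lastPort
      · rw [hi, hlast, mul_zero]
      · rw [hP i hi, mul_zero]
    rw [hc, hm, add_zero]
  have hE2 : ∑ k : Fin N.n, ∑ l : Fin N.n, N.c k l * (U k - U l) ^ 2 = 0 := by
    rw [energy_eq, hE, mul_zero]
  -- each term vanishes
  intro k l hkl
  have hnn : ∀ a ∈ (Finset.univ : Finset (Fin N.n)),
      0 ≤ ∑ b : Fin N.n, N.c a b * (U a - U b) ^ 2 := by
    intro a _
    exact Finset.sum_nonneg fun b _ => mul_nonneg (N.c_nonneg a b) (sq_nonneg _)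
  have h1 : ∑ b : Fin N.n, N.c k b * (U k - U b) ^ 2 = 0 :=
    (Finset.sum_eq_zero_iff_of_nonneg hnn).mp hE2 k (Finset.mem_univ k)
  have h2 : N.c k l * (U k - U l) ^ 2 = 0 :=
    (Finset.sum_eq_zero_iff_of_nonneg fun b _ =>
      mul_nonneg (N.c_nonneg k b) (sq_nonneg _)).mp h1 l (Finset.mem_univ l)
  have hc := N.c_pos k l hkl
  have : (U k - U l) ^ 2 = 0 := by
    rcases mul_eq_zero.mp h2 with h | h
    · exact absurd h hc.ne'
    · exact h
  have := sq_eq_zero_iff.mp this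
  linarith

lemma const_of_eq_on_adj (U : Fin N.n → ℝ)
    (h : ∀ k l, N.graph.Adj k l → U k = U l) : ∀ u v : Fin N.n, U u = U v := by
  intro u v
  obtain ⟨w⟩ := N.connected u v
  induction w with
  | nil => rfl
  | cons hadj _ ih => exact (h _ _ hadj).trans ih

end Network
end Superport

namespace Superport
namespace Network
variable (N : Network)

/-- Codomain of the constraint map. -/
abbrev Codom := ({v : Fin N.n // v ∉ N.M} → ℝ) × ({i : Fin N.p // i ≠ N.lastPort} → ℝ) ×
  (N.NonRoot → ℝ)

/-- The constraint linear map. -/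
noncomputable def Tmap : (Fin N.n → ℝ) →ₗ[ℝ] N.Codom where
  toFun U := (fun v => N.S U v.1,
              fun i => ∑ k ∈ N.A i.1, N.S U k,
              fun x => U x.1 - U (N.root x.1))
  map_add' U V := by
    refine Prod.ext ?_ (Prod.ext ?_ ?_)
    · funext v
      simp only [S, Prod.fst_add, Pi.add_apply]
      rw [← Finset.sum_add_distrib]
      exact Finset.sum_congr rfl fun l _ => by ring
    · funext i
      simp only [S, Prod.snd_add, Prod.fst_add, Pi.add_apply]
      rw [← Finset.sum_add_distrib]
      refine Finset.sum_congr rfl fun k _ => ?_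
      rw [← Finset.sum_add_distrib]
      exact Finset.sum_congr rfl fun l _ => by ring
    · funext x
      simp only [Prod.snd_add, Pi.add_apply]
      ring
  map_smul' a U := by
    refine Prod.ext ?_ (Prod.ext ?_ ?_)
    · funext v
      simp only [S, Prod.smul_fst, Pi.smul_apply, smul_eq_mul, RingHom.id_apply,
        Finset.mul_sum]
      exact Finset.sum_congr rfl fun l _ => by ring
    · funext i
      simp only [S, Prod.smul_snd, Prod.smul_fst, Pi.smul_apply, smul_eq_mul,
        RingHom.id_apply, Finset.mul_sum]
      refine Finset.sum_congr rfl fun k _ => ?_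
      exact Finset.sum_congr rfl fun l _ => by ring
    · funext x
      simp only [Prod.smul_snd, Pi.smul_apply, smul_eq_mul, RingHom.id_apply]
      ring

lemma ker_Tmap : LinearMap.ker N.Tmap = Submodule.span ℝ {fun _ => (1:ℝ)} := by
  apply le_antisymm
  · intro U hU
    have hU' : N.Tmap U = 0 := hU
    have hI : ∀ k, k ∉ N.M → N.S U k = 0 := fun k hk =>
      congrFun (congrArg Prod.fst hU') ⟨k, hk⟩
    have hP : ∀ i : Fin N.p, i ≠ N.lastPort → ∑ k ∈ N.A i, N.S U k = 0 := fun i hi =>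
      congrFun (congrArg (Prod.fst ∘ Prod.snd) hU') ⟨i, hi⟩
    have hB : ∀ k ∈ N.M, U k = U (N.root k) := by
      intro k hk
      by_cases hr : N.root k = k
      · rw [hr]
      · have h0 : U k - U (N.root k) = 0 :=
          congrFun (congrArg (Prod.snd ∘ Prod.snd) hU') ⟨k, hk, hr⟩
        linarith
    have hconst := N.const_of_eq_on_adj U (N.eq_on_adj_of_homogeneous U hI hP hB)
    obtain ⟨v0, _⟩ := N.M_nonempty
    have : U = (U v0) • (fun _ => (1:ℝ)) := by
      funext k; simp [hconst k v0]
    rw [this]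
    exact Submodule.smul_mem _ _ (Submodule.mem_span_singleton_self _)
  · rw [Submodule.span_le, Set.singleton_subset_iff]
    show N.Tmap (fun _ => (1:ℝ)) = 0
    refine Prod.ext ?_ (Prod.ext ?_ ?_)
    · funext v; simp [S, Tmap]
    · funext i; simp [S, Tmap]
    · funext x; simp [Tmap]

lemma card_M : N.M.card = ∑ i, (N.A i).card := by
  rw [M, Finset.card_biUnion]
  intro i _ j _ hij
  exact N.A_disjoint i j hij

lemma card_roots : (N.M.filter (fun v => N.root v = v)).card = N.p := by
  have heq : N.M.filter (fun v => N.root v = v) = Finset.univ.image N.portRoot := by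
    ext v
    simp only [Finset.mem_filter, Finset.mem_image, Finset.mem_univ, true_and]
    constructor
    · rintro ⟨hv, hr⟩
      obtain ⟨i, hi⟩ := N.mem_M_iff.mp hv
      exact ⟨i, by rw [← N.root_eq_portRoot hi, hr]⟩
    · rintro ⟨i, rfl⟩
      refine ⟨N.mem_M_iff.mpr ⟨i, N.portRoot_mem i⟩, ?_⟩
      exact N.root_eq_portRoot (N.portRoot_mem i)
  rw [heq, Finset.card_image_of_injective _ N.portRoot_injective, Finset.card_univ,
    Fintype.card_fin]

lemma p_le_m : N.p ≤ N.m := by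
  rw [m, ← N.card_roots]
  exact Finset.card_filter_le _ _

lemma m_le_n : N.m ≤ N.n := by
  rw [m]
  calc N.M.card ≤ (Finset.univ : Finset (Fin N.n)).card := Finset.card_le_card (Finset.subset_univ _)
  _ = N.n := by simp

lemma card_nonRoot : Fintype.card N.NonRoot = N.m - N.p := by
  have h1 : Fintype.card N.NonRoot
      = (Finset.univ.filter (fun v : Fin N.n => v ∈ N.M ∧ N.root v ≠ v)).card :=
    Fintype.card_subtype _
  have h2 : Finset.univ.filter (fun v : Fin N.n => v ∈ N.M ∧ N.root v ≠ v)
      = N.M \ (N.M.filter (fun v => N.root v = v)) := by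
    ext v
    simp only [Finset.mem_filter, Finset.mem_univ, true_and, Finset.mem_sdiff]
    tauto
  rw [h1, h2, Finset.card_sdiff_of_subset (Finset.filter_subset _ _), N.card_roots, m]

lemma card_interior : Fintype.card {v : Fin N.n // v ∉ N.M} = N.n - N.m := by
  rw [Fintype.card_subtype]
  have : Finset.univ.filter (fun v : Fin N.n => v ∉ N.M) = N.Mᶜ := by
    ext v; simp
  rw [this, Finset.card_compl, Fintype.card_fin, m]

lemma card_ports' : Fintype.card {i : Fin N.p // i ≠ N.lastPort} = N.p - 1 := by
  rw [Fintype.card_subtype]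
  have : Finset.univ.filter (fun i : Fin N.p => i ≠ N.lastPort) = {N.lastPort}ᶜ := by
    ext i; simp
  rw [this, Finset.card_compl, Fintype.card_fin, Finset.card_singleton]

lemma finrank_codom : Module.finrank ℝ N.Codom = N.n - 1 := by
  rw [Module.finrank_prod, Module.finrank_prod,
    Module.finrank_pi, Module.finrank_pi, Module.finrank_pi,
    N.card_interior, N.card_ports', N.card_nonRoot]
  have h1 := N.p_le_m
  have h2 := N.m_le_n
  have h3 := N.p_pos
  omega

lemma Tmap_surjective : Function.Surjective N.Tmap := by
  rw [← LinearMap.range_eq_top]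
  apply Submodule.eq_top_of_finrank_eq
  have hrk := N.Tmap.finrank_range_add_finrank_ker
  have hker : Module.finrank ℝ (LinearMap.ker N.Tmap) = 1 := by
    rw [N.ker_Tmap]
    apply finrank_span_singleton
    intro h
    have := congrFun h (⟨0, N.n_pos⟩ : Fin N.n)
    simp at this
  rw [hker, Module.finrank_fintype_fun_eq_card, Fintype.card_fin] at hrk
  rw [N.finrank_codom]
  have h3 := N.n_pos
  omega

end Network
end Superport

namespace Superport

/-- **Existence and uniqueness for `p`-port circuits** (superport circuits in which every
superport consists of exactly two vertices). -/
theorem exists_unique_voltages_currents_multiport (N : Network)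
    (hport : ∀ i, (N.A i).card = 2) (ΔU : Fin N.n → ℝ) :
    (∃ U I, N.Axioms ΔU U I) ∧
    (∀ U₁ I₁ U₂ I₂, N.Axioms ΔU U₁ I₁ → N.Axioms ΔU U₂ I₂ →
      I₁ = I₂ ∧ ∃ const : ℝ, ∀ k, U₁ k = U₂ k + const) := by
  constructor
  · -- existence
    obtain ⟨U, hU⟩ := N.Tmap_surjective (0, 0, fun x => ΔU x.1)
    refine ⟨U, fun k l => N.c k l * (U k - U l), fun k l => rfl, ?_, ?_, ?_⟩
    · intro k hk
      exact congrFun (congrArg Prod.fst hU) ⟨k, hk⟩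
    · intro i hi
      exact congrFun (congrArg (Prod.fst ∘ Prod.snd) hU) ⟨i, hi⟩
    · intro k hk hr
      exact congrFun (congrArg (Prod.snd ∘ Prod.snd) hU) ⟨k, hk, hr⟩
  · -- uniqueness
    rintro U₁ I₁ U₂ I₂ ⟨hC₁, hI₁, hP₁, hB₁⟩ ⟨hC₂, hI₂, hP₂, hB₂⟩
    set D : Fin N.n → ℝ := fun k => U₁ k - U₂ k with hD
    have hSD : ∀ k, N.S D k = (∑ l, I₁ k l) - (∑ l, I₂ k l) := by
      intro k
      rw [Network.S, ← Finset.sum_sub_distrib]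
      refine Finset.sum_congr rfl fun l _ => ?_
      rw [hC₁, hC₂, hD]; ring
    have hIh : ∀ k, k ∉ N.M → N.S D k = 0 := by
      intro k hk; rw [hSD, hI₁ k hk, hI₂ k hk, sub_zero]
    have hPh : ∀ i : Fin N.p, i ≠ N.lastPort → ∑ k ∈ N.A i, N.S D k = 0 := by
      intro i hi
      rw [Finset.sum_congr rfl fun k _ => hSD k, Finset.sum_sub_distrib,
        hP₁ i hi, hP₂ i hi, sub_zero]
    have hBh : ∀ k ∈ N.M, D k = D (N.root k) := by
      intro k hk
      by_cases hr : N.root k = k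
      · rw [hr]
      · have h1 := hB₁ k hk hr
        have h2 := hB₂ k hk hr
        simp only [hD]; linarith
    have hadj := N.eq_on_adj_of_homogeneous D hIh hPh hBh
    have hconst := N.const_of_eq_on_adj D hadj
    obtain ⟨v0, _⟩ := N.M_nonempty
    have hU12 : ∀ k, U₁ k = U₂ k + D v0 := by
      intro k
      have := hconst k v0
      simp only [hD] at this ⊢
      linarith
    refine ⟨?_, D v0, hU12⟩
    funext k l
    rw [hC₁, hC₂, hU12 k, hU12 l]; ring


end Superport
end

section
/- Let a superport circuit have prescribed voltage differences ΔU_{i,root(i)} = 1 for a fixed non-root boundary vertex i and ΔU_{k,root(k)} = 0 for every other non-root boundary vertex k, and let U, I satisfy axioms (C), (I), (P), (B). Consider the quotient of the graph by the {i}-equivalence, with the conductance between two distinct classes [u], [v] defined as c̄_{[u][v]} := Σ_{k∈[u], l∈[v]} c_{kl}, regarded as an electrical network whose two boundary vertices are [i] and [root(i)]. Then Ū([v]) := U_v − U_{root(i)} is a well-defined function on classes, and the voltages Ū together with the currents Ī_{[u][v]} := Σ_{k∈[u], l∈[v]} I_{kl} satisfy axioms (C) and (I) of this electrical circuit with prescribed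 voltages Ū([i]) = 1 and Ū([root(i)]) = 0. -/
open Finset BigOperators
open scoped Classical

namespace Superport

/-- **Gluing lemma** (Lemma 6.3): if in a superport circuit `ΔU_{i,root(i)} = 1` and all
the other prescribed voltage differences vanish, then the voltages descend to the quotient
by the `{i}`-equivalence, and together with the summed currents and conductances they
satisfy axioms (C) and (I) of the quotient electrical circuit with boundary vertices
`[i]`, `[root i]` and prescribed voltages `1`, `0`. -/
theorem gluing (N : Network) (i : Fin N.n) (hi : i ∈ N.M) (hir : N.root i ≠ i)
    (U : Fin N.n → ℝ) (I : Fin N.n → Fin N.n → ℝ)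
    (hax : N.Axioms (fun k => if k = i then 1 else 0) U I) :
    ∃ Ubar : Quotient (N.xSetoid {i}) → ℝ,
      (∀ v : Fin N.n, Ubar (Quotient.mk (N.xSetoid {i}) v) = U v - U (N.root i)) ∧
      Ubar (Quotient.mk (N.xSetoid {i}) i) = 1 ∧
      Ubar (Quotient.mk (N.xSetoid {i}) (N.root i)) = 0 ∧
      (∀ a b : Quotient (N.xSetoid {i}),
        (∑ k, ∑ l, if Quotient.mk (N.xSetoid {i}) k = a ∧ Quotient.mk (N.xSetoid {i}) l = b
          then I k l else 0) =
        (∑ k, ∑ l, if Quotient.mk (N.xSetoid {i}) k = a ∧ Quotient.mk (N.xSetoid {i}) l = b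
          then N.c k l else 0) * (Ubar a - Ubar b)) ∧
      (∀ a : Quotient (N.xSetoid {i}),
        a ≠ Quotient.mk (N.xSetoid {i}) i → a ≠ Quotient.mk (N.xSetoid {i}) (N.root i) →
        ∑ b : Quotient (N.xSetoid {i}),
          (∑ k, ∑ l, if Quotient.mk (N.xSetoid {i}) k = a ∧ Quotient.mk (N.xSetoid {i}) l = b
            then I k l else 0) = 0) := by
  classical
  obtain ⟨hC, hI, hP, hB⟩ := hax
  set s := N.xSetoid {i} with hs
  -- root is determined by the port
  have hroot_eq : ∀ (j : Fin N.p) (u : Fin N.n) (hu : u ∈ N.A j),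
      N.root u = (N.A j).max' ⟨u, hu⟩ := by
    intro j u hu
    have h : ∃ i, u ∈ N.A i := ⟨j, hu⟩
    rw [Network.root, dif_pos h]
    have hj : h.choose = j := by
      by_contra hne
      exact (Finset.disjoint_left.mp (N.A_disjoint _ _ hne) h.choose_spec) hu
    simp only [hj]
  have hUroot : ∀ k, k ∈ N.M → k ≠ i → U k = U (N.root k) := by
    intro k hk hki
    by_cases h : N.root k = k
    · rw [h]
    · have := hB k hk h
      simp only [if_neg hki] at this
      linarith
  -- U is constant on s-classes
  have hwd : ∀ u v, s.r u v → U u = U v := by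
    rintro u v (rfl | ⟨hu, hv, j, huj, hvj⟩)
    · rfl
    · have hu' : u ≠ i := by simpa using hu
      have hv' : v ≠ i := by simpa using hv
      have hru := hroot_eq j u huj
      have hrv := hroot_eq j v hvj
      rw [hUroot u (N.mem_M_iff.mpr ⟨j, huj⟩) hu',
          hUroot v (N.mem_M_iff.mpr ⟨j, hvj⟩) hv', hru, hrv]
  refine ⟨Quotient.lift (fun v => U v - U (N.root i))
      (fun u v h => by
        show U u - U (N.root i) = U v - U (N.root i)
        rw [hwd u v h]), fun v => rfl, ?_, ?_, ?_, ?_⟩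
  · have := hB i hi hir
    simp only [if_pos rfl] at this
    simpa using this
  · simp
  · intro a b
    rw [Finset.sum_mul]
    refine Finset.sum_congr rfl fun k _ => ?_
    rw [Finset.sum_mul]
    refine Finset.sum_congr rfl fun l _ => ?_
    by_cases h : Quotient.mk s k = a ∧ Quotient.mk s l = b
    · obtain ⟨ha, hb⟩ := h
      simp only [ha, hb, and_self, if_true, hC k l]
      rw [← ha, ← hb]
      show N.c k l * (U k - U l) =
        N.c k l * ((U k - U (N.root i)) - (U l - U (N.root i)))
      ring
    · simp [h]
  · intro a ha hb
    -- antisymmetry and total sum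
    have hanti : ∀ k l, I l k = - I k l := by
      intro k l; rw [hC, hC, N.c_symm l k]; ring
    have htotal : (∑ k, ∑ l, I k l) = 0 := by
      have h2 : (∑ k, ∑ l, I k l) = ∑ k, ∑ l, I l k := Finset.sum_comm
      have h3 : (∑ k, ∑ l, I l k) = - ∑ k, ∑ l, I k l := by
        rw [← Finset.sum_neg_distrib]
        refine Finset.sum_congr rfl fun k _ => ?_
        rw [← Finset.sum_neg_distrib]
        exact Finset.sum_congr rfl fun l _ => hanti k l
      linarith
    have hMsum : (∑ k ∈ N.M, ∑ l, I k l) = 0 := by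
      have hsplit := Finset.sum_add_sum_compl N.M (fun k => ∑ l, I k l)
      have hcomp : (∑ k ∈ N.Mᶜ, ∑ l, I k l) = 0 :=
        Finset.sum_eq_zero fun k hk => hI k (by simpa using hk)
      rw [hcomp, add_zero, htotal] at hsplit
      exact hsplit
    have hport : ∀ j, (∑ k ∈ N.A j, ∑ l, I k l) = 0 := by
      intro j
      by_cases hj : j = N.lastPort
      · subst hj
        have hbi : (∑ k ∈ N.M, ∑ l, I k l)
            = ∑ j' : Fin N.p, ∑ k ∈ N.A j', ∑ l, I k l :=
          Finset.sum_biUnion (fun x _ y _ hxy => N.A_disjoint x y hxy)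
        have hsingle := Finset.sum_eq_single_of_mem (s := Finset.univ) N.lastPort
          (Finset.mem_univ _)
          (fun j' _ hj' => hP j' hj')
        rw [hbi, hsingle] at hMsum
        exact hMsum
      · exact hP j hj
    -- collapse the double quotient sum
    have step : (∑ b : Quotient s, ∑ k, ∑ l,
        if Quotient.mk s k = a ∧ Quotient.mk s l = b then I k l else 0)
        = ∑ k, if Quotient.mk s k = a then (∑ l, I k l) else 0 := by
      rw [Finset.sum_comm]
      refine Finset.sum_congr rfl fun k _ => ?_
      by_cases hk : Quotient.mk s k = a
      · rw [if_pos hk, Finset.sum_comm]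
        refine Finset.sum_congr rfl fun l _ => ?_
        simp only [hk, true_and]
        rw [Finset.sum_ite_eq Finset.univ (Quotient.mk s l) (fun _ => I k l),
          if_pos (Finset.mem_univ _)]
      · simp only [hk, false_and, if_false, Finset.sum_const_zero]
    rw [step]
    obtain ⟨v, rfl⟩ := Quotient.exists_rep a
    have hvi : v ≠ i := fun h => ha (by rw [h])
    by_cases hvM : v ∈ N.M
    · obtain ⟨j, hvj⟩ := N.mem_M_iff.mp hvM
      have hij : i ∉ N.A j := by
        intro hijm
        apply hb
        have hri := hroot_eq j i hijm
        have hrij : N.root i ∈ N.A j := by rw [hri]; exact Finset.max'_mem _ _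
        exact Quotient.sound (Or.inr ⟨by simpa using hvi, by simpa using hir,
          j, hvj, hrij⟩)
      have hclass : ∀ k, Quotient.mk s k = Quotient.mk s v ↔ k ∈ N.A j := by
        intro k
        constructor
        · intro h
          rcases Quotient.exact h with rfl | ⟨hk, hv, j', hkj', hvj'⟩
          · exact hvj
          · have hj' : j' = j := by
              by_contra hne
              exact (Finset.disjoint_left.mp (N.A_disjoint _ _ hne) hvj') hvj
            exact hj' ▸ hkj'
        · intro hk
          refine Quotient.sound (Or.inr ⟨?_, by simpa using hvi, j, hk, hvj⟩)
          simp only [Set.mem_singleton_iff]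
          intro hki
          exact hij (hki ▸ hk)
      have : (∑ k, if Quotient.mk s k = Quotient.mk s v then (∑ l, I k l) else 0)
          = ∑ k ∈ N.A j, ∑ l, I k l := by
        rw [← Finset.sum_filter]
        apply Finset.sum_congr _ (fun _ _ => rfl)
        ext k
        simp only [Finset.mem_filter, Finset.mem_univ, true_and]
        exact hclass k
      rw [this]
      exact hport j
    · have hclass : ∀ k, Quotient.mk s k = Quotient.mk s v ↔ k = v := by
        intro k
        constructor
        · intro h
          rcases Quotient.exact h with rfl | ⟨_, _, j', _, hvj'⟩
          · rfl
          · exact absurd (N.mem_M_iff.mpr ⟨j', hvj'⟩) hvM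
        · rintro rfl; rfl
      have : (∑ k, if Quotient.mk s k = Quotient.mk s v then (∑ l, I k l) else 0)
          = ∑ l, I v l := by
        rw [Finset.sum_congr rfl (fun k _ => by rw [if_congr (hclass k) rfl rfl])]
        simp
      rw [this]
      exact hI v hvM

end Superport
end
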